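/- Let D be a complete, cocomplete, extremally co-well-powered, (extremal epi, mono) category. For an iso-filtered object (X, Q) of KD, the projective filtration on the KD-object (X, Q) generated by the KD-morphisms (X,Q) → Δ(X_δ) induced by the elements δ ∈ Q (where Δ : D → KD is the discrete filtration functor and X_δ is the target of δ) is a reduced iso-filtration in KD; the resulting canonical filtration functor κ : KD → K(KD) is both a right inverse and a right adjoint to the forgetful functor K(KD) → KD. -/

import Mathlib

open CategoryTheory CategoryTheory.Limits

universe w v u v₂ u₂

namespace FilteredCats

variable {D : Type u} [Category.{v} D]

/-- The class of morphisms of `D` with source `X`. -/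
def MorFrom (X : D) : Type (max u v) := Σ Y : D, X ⟶ Y

/-- `Dom δ₁ δ₂` means `δ₁ ≥ δ₂`: there is `h` with `h ∘ δ₁ = δ₂`. -/
def Dom {X : D} (δ₁ δ₂ : MorFrom X) : Prop :=
  ∃ h : δ₁.1 ⟶ δ₂.1, δ₁.2 ≫ h = δ₂.2

/-- A projective filtration on `X`: a nonempty, directed, saturated class of
morphisms with source `X`. -/
structure ProjFilt (X : D) where
  carrier : Set (MorFrom X)
  nonempty' : carrier.Nonempty
  directed' : ∀ δ₁ ∈ carrier, ∀ δ₂ ∈ carrier, ∃ δ ∈ carrier, Dom δ δ₁ ∧ Dom δ δ₂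
  saturated' : ∀ δ₁ ∈ carrier, ∀ δ₂, Dom δ₁ δ₂ → δ₂ ∈ carrier

/-- The pull back of a set of morphisms with source `X` along `f : X' ⟶ X`. -/
def pullSet {X' X : D} (f : X' ⟶ X) (S : Set (MorFrom X)) : Set (MorFrom X') :=
  {δ' | ∃ δ ∈ S, δ' = ⟨δ.1, f ≫ δ.2⟩}

/-- The pull back of a projective filtration along `f : X' ⟶ X`. -/
def ProjFilt.pull {X' X : D} (f : X' ⟶ X) (P : ProjFilt X) : ProjFilt X' where
  carrier := pullSet f P.carrier
  nonempty' := by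
    obtain ⟨δ, hδ⟩ := P.nonempty'
    exact ⟨⟨δ.1, f ≫ δ.2⟩, δ, hδ, rfl⟩
  directed' := by
    rintro _ ⟨δ₁, h₁, rfl⟩ _ ⟨δ₂, h₂, rfl⟩
    obtain ⟨δ, hδ, ⟨g₁, hg₁⟩, ⟨g₂, hg₂⟩⟩ := P.directed' δ₁ h₁ δ₂ h₂
    exact ⟨⟨δ.1, f ≫ δ.2⟩, ⟨δ, hδ, rfl⟩,
      ⟨g₁, by simp [hg₁]⟩, ⟨g₂, by simp [hg₂]⟩⟩
  saturated' := by
    rintro _ ⟨δ, hδ, rfl⟩ δ₂ ⟨h, hh⟩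
    refine ⟨⟨δ₂.1, δ.2 ≫ h⟩, P.saturated' δ hδ _ ⟨h, rfl⟩, ?_⟩
    obtain ⟨Y₂, g₂⟩ := δ₂
    have hg : g₂ = f ≫ (δ.2 ≫ h) := by simpa using hh.symm
    exact Sigma.ext rfl (heq_of_eq hg)

/-- A projectively filtered object of `D`. -/
structure PObj (D : Type u) [Category.{v} D] where
  base : D
  filt : ProjFilt base

/-- A morphism of projectively filtered objects: a morphism of the underlying
objects such that the pull back of the target filtration is contained in the
source filtration. -/
structure PHom (A B : PObj D) : Type v where
  toHom : A.base ⟶ B.base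
  mem : ∀ δ ∈ B.filt.carrier, (⟨δ.1, toHom ≫ δ.2⟩ : MorFrom A.base) ∈ A.filt.carrier

theorem PHom.ext' {A B : PObj D} {f g : PHom A B} (h : f.toHom = g.toHom) : f = g := by
  cases f; cases g; cases h; rfl

instance : Category.{v} (PObj D) where
  Hom := PHom
  id A := ⟨𝟙 A.base, fun δ hδ => by rw [Category.id_comp]; exact hδ⟩
  comp {A B C} f g := ⟨f.toHom ≫ g.toHom, fun δ hδ => by
    have h1 := g.mem δ hδ
    have h2 := f.mem _ h1
    simpa using h2⟩
  id_comp f := PHom.ext' (Category.id_comp _)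
  comp_id f := PHom.ext' (Category.comp_id _)
  assoc f g h := PHom.ext' (Category.assoc _ _ _)

@[simp] theorem PObj.id_toHom (A : PObj D) : PHom.toHom (𝟙 A) = 𝟙 A.base := rfl
@[simp] theorem PObj.comp_toHom {A B C : PObj D} (f : A ⟶ B) (g : B ⟶ C) :
    PHom.toHom (f ≫ g) = PHom.toHom f ≫ PHom.toHom g := rfl

/-- The forgetful functor `PD → D`. -/
def Pforget (D : Type u) [Category.{v} D] : PObj D ⥤ D where
  obj A := A.base
  map f := PHom.toHom f

/-- The discrete filtration functor `D → PD`, `X ↦ (X, M(X))`. -/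
def Pdiscrete (D : Type u) [Category.{v} D] : D ⥤ PObj D where
  obj X :=
    { base := X
      filt :=
        { carrier := Set.univ
          nonempty' := ⟨⟨X, 𝟙 X⟩, trivial⟩
          directed' := fun δ₁ _ δ₂ _ =>
            ⟨⟨X, 𝟙 X⟩, trivial, ⟨δ₁.2, Category.id_comp _⟩, ⟨δ₂.2, Category.id_comp _⟩⟩
          saturated' := fun _ _ _ _ => trivial } }
  map f := ⟨f, fun _ _ => trivial⟩

/-- The functor `PD → PE` induced by a functor `G : D → E`. -/
def Pfunctor {E : Type u₂} [Category.{v₂} E] (G : D ⥤ E) : PObj D ⥤ PObj E where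
  obj A :=
    { base := G.obj A.base
      filt :=
        { carrier := {δ' | ∃ δ ∈ A.filt.carrier,
            Dom (⟨G.obj δ.1, G.map δ.2⟩ : MorFrom (G.obj A.base)) δ'}
          nonempty' := by
            obtain ⟨δ, hδ⟩ := A.filt.nonempty'
            exact ⟨⟨G.obj δ.1, G.map δ.2⟩, δ, hδ, ⟨𝟙 _, Category.comp_id _⟩⟩
          directed' := by
            rintro δ'₁ ⟨δ₁, h₁, g₁, hg₁⟩ δ'₂ ⟨δ₂, h₂, g₂, hg₂⟩
            obtain ⟨δ, hδ, ⟨k₁, hk₁⟩, ⟨k₂, hk₂⟩⟩ := A.filt.directed' δ₁ h₁ δ₂ h₂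
            refine ⟨⟨G.obj δ.1, G.map δ.2⟩, ⟨δ, hδ, ⟨𝟙 _, Category.comp_id _⟩⟩,
              ⟨G.map k₁ ≫ g₁, ?_⟩, ⟨G.map k₂ ≫ g₂, ?_⟩⟩
            · rw [← Category.assoc, ← G.map_comp, hk₁, hg₁]
            · rw [← Category.assoc, ← G.map_comp, hk₂, hg₂]
          saturated' := by
            rintro δ'₁ ⟨δ, hδ, g, hg⟩ δ'₂ ⟨h, hh⟩
            exact ⟨δ, hδ, ⟨g ≫ h, by rw [← Category.assoc, hg, hh]⟩⟩ } }
  map {A B} f :=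
    ⟨G.map (PHom.toHom f), by
      rintro δ' ⟨δ, hδ, g, hg⟩
      exact ⟨⟨δ.1, PHom.toHom f ≫ δ.2⟩, f.mem δ hδ,
        ⟨g, by rw [← hg, ← Category.assoc, ← G.map_comp]⟩⟩⟩
  map_id A := PHom.ext' (G.map_id _)
  map_comp f g := PHom.ext' (G.map_comp _ _)

/-- An extremal epimorphism: an epimorphism such that in any factorisation
through a monomorphism, the monomorphism is an isomorphism. -/
def ExtremalEpi {C : Type u₂} [Category.{v₂} C] {X Y : C} (e : X ⟶ Y) : Prop :=
  Epi e ∧ ∀ ⦃Z : C⦄ (g : X ⟶ Z) (m : Z ⟶ Y), Mono m → g ≫ m = e → IsIso m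

/-- An (extremal epi, mono) category: every morphism factors as an extremal
epimorphism followed by a monomorphism and such factorisations have the
diagonal fill-in property. -/
structure EMCat (C : Type u₂) [Category.{v₂} C] : Prop where
  fact : ∀ {X Y : C} (f : X ⟶ Y), ∃ (Z : C) (e : X ⟶ Z) (m : Z ⟶ Y),
    ExtremalEpi e ∧ Mono m ∧ e ≫ m = f
  diag : ∀ {A B Z X : C} (e : A ⟶ B) (m : Z ⟶ X) (g : A ⟶ Z) (h : B ⟶ X),
    ExtremalEpi e → Mono m → g ≫ m = e ≫ h → ∃ d : B ⟶ Z, e ≫ d = g ∧ d ≫ m = h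

/-- A projective filtration is reduced if it has an initial subclass of
extremal epimorphisms. -/
def ProjFilt.Reduced {X : D} (P : ProjFilt X) : Prop :=
  ∀ δ ∈ P.carrier, ∃ ε ∈ P.carrier, ExtremalEpi ε.2 ∧ Dom ε δ

/-- The category of reduced projectively filtered objects of `D`. -/
def QObj (D : Type u) [Category.{v} D] := ObjectProperty.FullSubcategory (fun A : PObj D => A.filt.Reduced)

instance : Category.{v} (QObj D) := ObjectProperty.FullSubcategory.category _

/-- The inclusion functor `QD → PD`. -/
def qpInclusion (D : Type u) [Category.{v} D] : QObj D ⥤ PObj D :=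
  ObjectProperty.ι _

/-- A category is extremally co-well-powered if every object has, up to
isomorphism, only a (small) set of extremal epimorphisms out of it. -/
def ECWP (C : Type u₂) [Category.{v₂} C] : Prop :=
  ∀ X : C, ∃ (ι : Type v₂) (Y : ι → C) (e : ∀ i, X ⟶ Y i),
    (∀ i, ExtremalEpi (e i)) ∧
    ∀ ⦃Z : C⦄ (f : X ⟶ Z), ExtremalEpi f → ∃ (i : ι) (φ : Y i ≅ Z), e i ≫ φ.hom = f

/-- The category `(P, D)` associated to a projective filtration: objects are the
elements of `P`, morphisms `δ₁ → δ₂` are morphisms `g` of `D` with `g ∘ δ₁ = δ₂`. -/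
def FiltCat {X : D} (P : ProjFilt X) : Type (max u v) := {δ : MorFrom X // δ ∈ P.carrier}

instance {X : D} (P : ProjFilt X) : Category.{v} (FiltCat P) where
  Hom δ₁ δ₂ := {g : δ₁.1.1 ⟶ δ₂.1.1 // δ₁.1.2 ≫ g = δ₂.1.2}
  id δ := ⟨𝟙 _, Category.comp_id _⟩
  comp f g := ⟨f.1 ≫ g.1, by rw [← Category.assoc, f.2, g.2]⟩
  id_comp f := Subtype.ext (Category.id_comp _)
  comp_id f := Subtype.ext (Category.comp_id _)
  assoc f g h := Subtype.ext (Category.assoc _ _ _)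

/-- The functor `(P, D) → D` sending an element of the filtration to its target. -/
def FiltDiagram {X : D} (P : ProjFilt X) : FiltCat P ⥤ D where
  obj δ := δ.1.1
  map g := g.1

/-- The canonical cone on the diagram of a projective filtration, with apex the
underlying object. -/
def filtCone {X : D} (P : ProjFilt X) : Limits.Cone (FiltDiagram P) where
  pt := X
  π :=
    { app := fun δ => δ.1.2
      naturality := fun δ₁ δ₂ g => by
        have := g.2
        dsimp [FiltDiagram] at *
        simp [this] }

/-- A reduced projective filtration is an iso-filtration if the canonical cone
on its diagram is a limit cone, i.e. the limit exists and the canonical morphism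
from the underlying object to it is an isomorphism. -/
def IsoFilt {X : D} (P : ProjFilt X) : Prop :=
  Nonempty (Limits.IsLimit (filtCone P))

/-- The category of iso-filtered objects of `D`. -/
def KObj (D : Type u) [Category.{v} D] :=
  ObjectProperty.FullSubcategory (fun A : QObj D => IsoFilt A.obj.filt)

instance : Category.{v} (KObj D) := ObjectProperty.FullSubcategory.category _

/-- The inclusion functor `KD → QD`. -/
def kqInclusion (D : Type u) [Category.{v} D] : KObj D ⥤ QObj D :=
  ObjectProperty.ι _

/-- The forgetful functor `KD → D`. -/
def Kforget (D : Type u) [Category.{v} D] : KObj D ⥤ D :=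
  kqInclusion D ⋙ qpInclusion D ⋙ Pforget D

/-- The smallest projective filtration containing a class of morphisms
(as a class). -/
def genSet {X : D} (S : Set (MorFrom X)) : Set (MorFrom X) :=
  {δ | ∀ P : ProjFilt X, S ⊆ P.carrier → δ ∈ P.carrier}

/-- The reduction of a class of morphisms: the saturation of the class of
extremal epimorphism parts of (extremal epi, mono)-factorisations of its
elements. -/
def redSet {X : D} (S : Set (MorFrom X)) : Set (MorFrom X) :=
  {δ | ∃ ε : MorFrom X, ExtremalEpi ε.2 ∧
    (∃ δ' ∈ S, ∃ m : ε.1 ⟶ δ'.1, Mono m ∧ ε.2 ≫ m = δ'.2) ∧ Dom ε δ}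

/-- The push forward of a filtration class along `f` (single morphism case). -/
def pushSet {X Y : D} (f : X ⟶ Y) (S : Set (MorFrom X)) : Set (MorFrom Y) :=
  {g | (⟨g.1, f ≫ g.2⟩ : MorFrom X) ∈ S}

/-- The discrete filtration on an object, as an iso-filtered object. -/
def kDiscreteObj (X : D) : KObj D where
  obj :=
    { obj := (Pdiscrete D).obj X
      property := fun δ _ => ⟨⟨X, 𝟙 X⟩, trivial,
        ⟨(inferInstance : Epi (𝟙 X)), fun _ g m hm hgm => by
          haveI : IsSplitEpi m := ⟨⟨⟨g, hgm⟩⟩⟩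
          exact isIso_of_mono_of_isSplitEpi m⟩,
        ⟨δ.2, Category.id_comp _⟩⟩ }
  property := ⟨{
    lift := fun c => c.π.app ⟨⟨X, 𝟙 X⟩, trivial⟩
    fac := fun c j => by
      have h := c.π.naturality (X := ⟨⟨X, 𝟙 X⟩, trivial⟩) (Y := j)
        ⟨j.1.2, Category.id_comp _⟩
      dsimp [FiltDiagram, filtCone] at h ⊢
      exact h.symm.trans (Category.id_comp _)
    uniq := fun c m hm => by
      have h := hm ⟨⟨X, 𝟙 X⟩, trivial⟩
      rw [← Category.comp_id m]
      exact h }⟩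

/-- The discrete filtration functor `D → KD`. -/
def kDiscrete (D : Type u) [Category.{v} D] : D ⥤ KObj D where
  obj X := kDiscreteObj X
  map f := ⟨⟨⟨f, fun _ _ => trivial⟩⟩⟩
  map_id _ := InducedCategory.hom_ext (InducedCategory.hom_ext (PHom.ext' rfl))
  map_comp _ _ := InducedCategory.hom_ext (InducedCategory.hom_ext (PHom.ext' rfl))

/-- The morphism in `KD` from an iso-filtered object to the discrete object on
the target of an element of its filtration. -/
def kToDiscrete {A : KObj D} (δ : MorFrom A.obj.obj.base)
    (hδ : δ ∈ A.obj.obj.filt.carrier) : A ⟶ kDiscreteObj δ.1 :=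
  ⟨⟨(⟨δ.2, fun γ _ => A.obj.obj.filt.saturated' δ hδ _ ⟨γ.2, rfl⟩⟩ :
    PHom A.obj.obj ((kDiscreteObj δ.1).obj.obj))⟩⟩

/-- The natural transformation `P(G) → P(H)` induced by `ν : G → H`. -/
def Pnat {E : Type u₂} [Category.{v₂} E] {G H : D ⥤ E} (ν : G ⟶ H) :
    Pfunctor G ⟶ Pfunctor H where
  app A :=
    ⟨ν.app A.base, by
      rintro δ' ⟨δ, hδ, g, hg⟩
      exact ⟨δ, hδ, ⟨ν.app δ.1 ≫ g, by
        rw [← Category.assoc, ν.naturality, Category.assoc, hg]; rfl⟩⟩⟩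
  naturality {A B} f := PHom.ext' (ν.naturality (PHom.toHom f))


/-- The class of `KD`-morphisms from an iso-filtered object `A` to discrete
objects induced by the elements of its filtration. -/
def canonClass (A : KObj D) : Set (MorFrom A) :=
  {μ | ∃ (δ : MorFrom A.obj.obj.base) (hδ : δ ∈ A.obj.obj.filt.carrier),
    μ = ⟨kDiscreteObj δ.1, kToDiscrete δ hδ⟩}

/-- The saturation of `canonClass A`: the canonical filtration on the
`KD`-object `A`. -/
def canonSat (A : KObj D) : Set (MorFrom A) :=
  {μ | ∃ ν ∈ canonClass A, Dom ν μ}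

attribute [reducible] MorFrom filtCone FiltDiagram

def kT {C : Type u₂} [Category.{v₂} C] {A B : KObj C} (f : A ⟶ B) :
    A.obj.obj.base ⟶ B.obj.obj.base := f.hom.hom.toHom

theorem kM {C : Type u₂} [Category.{v₂} C] {A B : KObj C} (f : A ⟶ B) :
    ∀ δ ∈ B.obj.obj.filt.carrier,
      (⟨δ.1, kT f ≫ δ.2⟩ : MorFrom A.obj.obj.base) ∈ A.obj.obj.filt.carrier :=
  f.hom.hom.mem

theorem kExt {C : Type u₂} [Category.{v₂} C] {A B : KObj C} {f g : A ⟶ B}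
    (h : kT f = kT g) : f = g :=
  InducedCategory.hom_ext (InducedCategory.hom_ext (PHom.ext' h))

def kMk {C : Type u₂} [Category.{v₂} C] {A B : KObj C} (f : PHom A.obj.obj B.obj.obj) :
    A ⟶ B := ⟨⟨f⟩⟩

theorem Dom.refl {X : D} (a : MorFrom X) : Dom a a :=
  ⟨𝟙 _, Category.comp_id _⟩

theorem Dom.trans {X : D} {a b c : MorFrom X} (h1 : Dom a b) (h2 : Dom b c) : Dom a c := by
  obtain ⟨h, hh⟩ := h1
  obtain ⟨k, hk⟩ := h2
  exact ⟨h ≫ k, by rw [← Category.assoc, hh, hk]⟩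

/-- Any `D`-morphism from `Z` into the underlying object of an iso-filtered
object is a `KD`-morphism from the discrete object on `Z`. -/
def fromDiscrete {Z : D} {B : KObj D} (g : Z ⟶ B.obj.obj.base) : kDiscreteObj Z ⟶ B :=
  kMk <| show PHom ((kDiscreteObj Z).obj.obj) B.obj.obj from ⟨g, fun _ _ => trivial⟩

@[simp] theorem fromDiscrete_toHom {Z : D} {B : KObj D} (g : Z ⟶ B.obj.obj.base) :
    kT (fromDiscrete g) = g := rfl

theorem toHom_mem {B : KObj D} {Y : D} (f : B ⟶ kDiscreteObj Y) :
    (⟨Y, kT f⟩ : MorFrom B.obj.obj.base) ∈ B.obj.obj.filt.carrier := by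
  have h := kM f ⟨Y, 𝟙 Y⟩ trivial
  refine B.obj.obj.filt.saturated' _ h _ ⟨𝟙 Y, ?_⟩
  exact (Category.comp_id _).trans (Category.comp_id _)

theorem kMono_of_mono {A B : KObj D} (f : A ⟶ B) (h : Mono (kT f)) : Mono f := by
  constructor
  intro T u v huv
  exact kExt (h.right_cancellation _ _ (congrArg kT huv))

/-- The canonical morphism to a discrete object on an extremal-epi element of
the filtration is an extremal epimorphism in `KD`. -/
theorem kToDiscrete_extremal {A : KObj D} {δ : MorFrom A.obj.obj.base}
    (hδ : δ ∈ A.obj.obj.filt.carrier) (hext : ExtremalEpi δ.2) :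
    ExtremalEpi (kToDiscrete δ hδ) := by
  constructor
  · constructor
    intro Z u v huv
    exact kExt (hext.1.left_cancellation _ _ (congrArg kT huv))
  · intro Z g m hm hgm
    have hmD : Mono (kT m) := by
      constructor
      intro W u v huv
      have := hm.right_cancellation (fromDiscrete (B := Z) u) (fromDiscrete v)
        (kExt huv)
      exact congrArg kT this
    have hiso : IsIso (kT m) :=
      hext.2 (kT g) (kT m) hmD (congrArg kT hgm)
    refine ⟨⟨kMk <| show PHom ((kDiscreteObj δ.1).obj.obj) Z.obj.obj from
      ⟨inv (kT m), fun _ _ => trivial⟩, ?_, ?_⟩⟩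
    · exact kExt (show kT m ≫ inv (kT m) = 𝟙 _ by simp)
    · exact kExt (show inv (kT m) ≫ kT m = 𝟙 _ by simp)

/-- A reduced saturated class is closed under division by monomorphisms. -/
theorem mono_division (hEM : EMCat D) {X : D} {P : ProjFilt X} (hred : P.Reduced)
    {δ : MorFrom X} (hδ : δ ∈ P.carrier) {Z : D} (g : X ⟶ Z) (m : Z ⟶ δ.1)
    (hm : Mono m) (hgm : g ≫ m = δ.2) : (⟨Z, g⟩ : MorFrom X) ∈ P.carrier := by
  obtain ⟨ε, hε, hee, k, hk⟩ := hred δ hδ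
  obtain ⟨d, hd1, hd2⟩ := hEM.diag ε.2 m g k hee hm (by rw [hgm, hk])
  exact P.saturated' ε hε _ ⟨d, hd1⟩

/-- Auxiliary cone for `kforgetIsLimit`. -/
@[reducible] def kdCone {B : KObj D} (R : ProjFilt B) (s : Cone (FiltDiagram R ⋙ Kforget D)) :
    Cone (FiltDiagram R) where
  pt := kDiscreteObj s.pt
  π :=
    { app := fun j => fromDiscrete (s.π.app j)
      naturality := fun j j' g => by
        have h := s.π.naturality g
        dsimp at h ⊢
        exact kExt h }

/-- The forgetful functor `KD → D` preserves the limit of the diagram of a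
projective filtration in `KD`. -/
noncomputable def kforgetIsLimit {B : KObj D} (R : ProjFilt B)
    (hR : IsLimit (filtCone R)) : IsLimit ((Kforget D).mapCone (filtCone R)) := by
  refine ⟨fun s => kT (hR.lift (kdCone R s)),
    fun s j => ?_, fun s m hm => ?_⟩
  · exact congrArg kT (hR.fac (kdCone R s) j)
  · have : fromDiscrete (B := B) m = hR.lift (kdCone R s) :=
      hR.uniq (kdCone R s) (fromDiscrete m) (fun j => kExt (hm j))
    exact congrArg kT this


noncomputable section PBSection

variable [Limits.HasLimits D]

/-- Generating morphisms for the filtration on a pullback. -/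
@[reducible] def pbU {XC V0 : D} (σ : MorFrom XC) (m : V0 ⟶ σ.1) (δ : MorFrom XC) :
    MorFrom (pullback σ.2 m) :=
  ⟨δ.1 ⨯ V0, prod.lift (pullback.fst σ.2 m ≫ δ.2) (pullback.snd σ.2 m)⟩

/-- The reduced filtration class on a pullback. -/
def pbS {XC V0 : D} (QC : ProjFilt XC) (σ : MorFrom XC) (m : V0 ⟶ σ.1) :
    Set (MorFrom (pullback σ.2 m)) :=
  {r | ∃ δ : MorFrom XC, δ ∈ QC.carrier ∧ Dom δ σ ∧
    ∃ (W' : D) (eW : pullback σ.2 m ⟶ W') (mW : W' ⟶ δ.1 ⨯ V0), ExtremalEpi eW ∧ Mono mW ∧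
      eW ≫ mW = (pbU σ m δ).2 ∧ Dom (⟨W', eW⟩ : MorFrom (pullback σ.2 m)) r}

variable {XC V0 : D} {QC : ProjFilt XC} {σ : MorFrom XC} {m : V0 ⟶ σ.1}

theorem pbU_mem (hEM : EMCat D) (δ : MorFrom XC) (hδ : δ ∈ QC.carrier) (hd : Dom δ σ) :
    pbU σ m δ ∈ pbS QC σ m := by
  obtain ⟨W', eW, mW, h1, h2, h3⟩ := hEM.fact (pbU σ m δ).2
  exact ⟨δ, hδ, hd, W', eW, mW, h1, h2, h3, mW, h3⟩

theorem pb_key (hEM : EMCat D) {δh δ : MorFrom XC} (hdom : Dom δh δ)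
    {W : D} {eh : pullback σ.2 m ⟶ W} {mh : W ⟶ δh.1 ⨯ V0} (hxh : ExtremalEpi eh)
    (hfh : eh ≫ mh = (pbU σ m δh).2)
    {W' : D} {eW : pullback σ.2 m ⟶ W'} {mW : W' ⟶ δ.1 ⨯ V0} (hmW : Mono mW)
    (hfW : eW ≫ mW = (pbU σ m δ).2) :
    Dom (⟨W, eh⟩ : MorFrom (pullback σ.2 m)) ⟨W', eW⟩ := by
  obtain ⟨g, hg⟩ := hdom
  have hsq : eW ≫ mW = eh ≫ (mh ≫ prod.map g (𝟙 V0)) := by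
    rw [hfW, ← Category.assoc eh mh, hfh]
    dsimp [pbU]
    rw [prod.lift_map, Category.comp_id, Category.assoc, hg]
  obtain ⟨d, hd1, hd2⟩ := hEM.diag eh mW eW (mh ≫ prod.map g (𝟙 V0)) hxh hmW hsq
  exact ⟨d, hd1⟩

/-- The filtration on the pullback. -/
def pbSF (hEM : EMCat D) (hσ : σ ∈ QC.carrier) : ProjFilt (pullback σ.2 m) where
  carrier := pbS QC σ m
  nonempty' := ⟨pbU σ m σ, pbU_mem hEM σ hσ (Dom.refl σ)⟩
  directed' := by
    rintro r₁ ⟨δ₁, hδ₁, hd₁, W₁, e₁, m₁, hx₁, hm₁, hf₁, hdom₁⟩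
      r₂ ⟨δ₂, hδ₂, hd₂, W₂, e₂, m₂, hx₂, hm₂, hf₂, hdom₂⟩
    obtain ⟨δh, hδh, hdd₁, hdd₂⟩ := QC.directed' δ₁ hδ₁ δ₂ hδ₂
    obtain ⟨W, eh, mh, hxh, hmh, hfh⟩ := hEM.fact (pbU σ m δh).2
    refine ⟨⟨W, eh⟩, ⟨δh, hδh, Dom.trans hdd₁ hd₁, W, eh, mh, hxh, hmh, hfh, Dom.refl _⟩, ?_, ?_⟩
    · exact Dom.trans (pb_key hEM hdd₁ hxh hfh hm₁ hf₁) hdom₁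
    · exact Dom.trans (pb_key hEM hdd₂ hxh hfh hm₂ hf₂) hdom₂
  saturated' := by
    rintro r₁ ⟨δ, hδ, hd, W', eW, mW, hx, hm2, hf, hdom⟩ r₂ hd₂
    exact ⟨δ, hδ, hd, W', eW, mW, hx, hm2, hf, Dom.trans hdom hd₂⟩

theorem pbSF_reduced (hEM : EMCat D) (hσ : σ ∈ QC.carrier) : (pbSF hEM hσ (m := m)).Reduced := by
  rintro r ⟨δ, hδ, hd, W', eW, mW, hx, hm2, hf, hdom⟩
  exact ⟨⟨W', eW⟩, ⟨δ, hδ, hd, W', eW, mW, hx, hm2, hf, Dom.refl _⟩, hx, hdom⟩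

theorem pb_jP (hEM : EMCat D) (hσ : σ ∈ QC.carrier) (δ' : MorFrom XC) (hδ' : δ' ∈ QC.carrier) :
    (⟨δ'.1, pullback.fst σ.2 m ≫ δ'.2⟩ : MorFrom (pullback σ.2 m)) ∈ pbS QC σ m := by
  obtain ⟨δh, hδh, hdd, hdσ⟩ := QC.directed' δ' hδ' σ hσ
  obtain ⟨W, eh, mh, hxh, hmh, hfh⟩ := hEM.fact (pbU σ m δh).2
  obtain ⟨g, hg⟩ := hdd
  refine ⟨δh, hδh, hdσ, W, eh, mh, hxh, hmh, hfh, ⟨mh ≫ prod.fst ≫ g, ?_⟩⟩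
  rw [show eh ≫ mh ≫ prod.fst ≫ g = ((eh ≫ mh) ≫ prod.fst) ≫ g by
    simp only [Category.assoc], hfh]
  dsimp [pbU]
  rw [prod.lift_fst, Category.assoc, hg]

/-- The restriction of a cone over the pullback filtration to a cone over the
original filtration. -/
@[reducible] def pbConeQC (hEM : EMCat D) (hσ : σ ∈ QC.carrier) (s : Cone (FiltDiagram (pbSF hEM hσ (m := m)))) : Cone (FiltDiagram QC) where
  pt := s.pt
  π :=
    { app := fun δ' => s.π.app ⟨⟨δ'.1.1, pullback.fst σ.2 m ≫ δ'.1.2⟩, pb_jP hEM hσ δ'.1 δ'.2⟩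
      naturality := fun j j' g => by
        let jj : FiltCat (pbSF hEM hσ (m := m)) :=
          ⟨⟨j.1.1, pullback.fst σ.2 m ≫ j.1.2⟩, pb_jP hEM hσ j.1 j.2⟩
        let jj' : FiltCat (pbSF hEM hσ (m := m)) :=
          ⟨⟨j'.1.1, pullback.fst σ.2 m ≫ j'.1.2⟩, pb_jP hEM hσ j'.1 j'.2⟩
        have h := s.w (show jj ⟶ jj' from ⟨g.1, by
          rw [Category.assoc]
          exact congrArg _ g.2⟩)
        dsimp [FiltDiagram, jj, jj'] at h ⊢
        rw [Category.id_comp]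
        exact h.symm }

/-- Constructor for objects of a filtration category. -/
@[reducible] def fcMk {X : D} (P : ProjFilt X) (δ : MorFrom X) (h : δ ∈ P.carrier) : FiltCat P := ⟨δ, h⟩

/-- Constructor for morphisms of a filtration category. -/
@[reducible] def fcHom {X : D} {P : ProjFilt X} (a b : FiltCat P) (g : a.1.1 ⟶ b.1.1)
    (hg : a.1.2 ≫ g = b.1.2) : a ⟶ b := ⟨g, hg⟩

/-- The distinguished element of the pullback filtration category. -/
@[reducible] def pbjU (hEM : EMCat D) (hσ : σ ∈ QC.carrier) : FiltCat (pbSF hEM hσ (m := m)) :=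
  ⟨pbU σ m σ, pbU_mem hEM σ hσ (Dom.refl σ)⟩

theorem pb_facV (hEM : EMCat D) (hσ : σ ∈ QC.carrier) (hClim : IsLimit (filtCone QC))
    (s : Cone (FiltDiagram (pbSF hEM hσ (m := m)))) (δ' : FiltCat QC) :
    hClim.lift (pbConeQC hEM hσ s) ≫ δ'.1.2 =
      s.π.app ⟨⟨δ'.1.1, pullback.fst σ.2 m ≫ δ'.1.2⟩, pb_jP hEM hσ δ'.1 δ'.2⟩ :=
  hClim.fac (pbConeQC hEM hσ s) δ'

theorem pb_keyEq (hEM : EMCat D) (hσ : σ ∈ QC.carrier) (hClim : IsLimit (filtCone QC))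
    (s : Cone (FiltDiagram (pbSF hEM hσ (m := m)))) :
    hClim.lift (pbConeQC hEM hσ s) ≫ σ.2 =
      (s.π.app (pbjU hEM hσ) ≫ prod.snd) ≫ m := by
  have h2 := s.w (show (pbjU hEM hσ) ⟶
      ⟨⟨σ.1, pullback.fst σ.2 m ≫ σ.2⟩, pb_jP hEM hσ σ hσ⟩ from
    ⟨prod.snd ≫ m, by
      dsimp [pbjU, pbU]
      rw [← Category.assoc, prod.lift_snd, pullback.condition]⟩)
  have h1 := pb_facV hEM hσ hClim s ⟨σ, hσ⟩
  dsimp [FiltDiagram] at h2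
  rw [Category.assoc, h1]
  exact h2.symm

/-- The canonical lift for a cone over the pullback filtration. -/
def pbL (hEM : EMCat D) (hσ : σ ∈ QC.carrier) (hClim : IsLimit (filtCone QC))
    (s : Cone (FiltDiagram (pbSF hEM hσ (m := m)))) : s.pt ⟶ pullback σ.2 m :=
  pullback.lift (hClim.lift (pbConeQC hEM hσ s)) (s.π.app (pbjU hEM hσ) ≫ prod.snd)
    (pb_keyEq hEM hσ hClim s)

theorem pbL_fst (hEM : EMCat D) (hσ : σ ∈ QC.carrier) (hClim : IsLimit (filtCone QC))
    (s : Cone (FiltDiagram (pbSF hEM hσ (m := m)))) :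
    pbL hEM hσ hClim s ≫ pullback.fst σ.2 m = hClim.lift (pbConeQC hEM hσ s) :=
  pullback.lift_fst _ _ _

theorem pbL_snd (hEM : EMCat D) (hσ : σ ∈ QC.carrier) (hClim : IsLimit (filtCone QC))
    (s : Cone (FiltDiagram (pbSF hEM hσ (m := m)))) :
    pbL hEM hσ hClim s ≫ pullback.snd σ.2 m = s.π.app (pbjU hEM hσ) ≫ prod.snd :=
  pullback.lift_snd _ _ _

theorem pb_facU (hEM : EMCat D) (hσ : σ ∈ QC.carrier) (hClim : IsLimit (filtCone QC))
    (s : Cone (FiltDiagram (pbSF hEM hσ (m := m))))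
    (δ : MorFrom XC) (hδ : δ ∈ QC.carrier) (hd : Dom δ σ) :
    pbL hEM hσ hClim s ≫ (pbU σ m δ).2 = s.π.app ⟨pbU σ m δ, pbU_mem hEM δ hδ hd⟩ := by
  have h1 : (pbU σ m δ).2 ≫ prod.fst = pullback.fst σ.2 m ≫ δ.2 := prod.lift_fst _ _
  apply Limits.prod.hom_ext
  · rw [Category.assoc, h1, ← Category.assoc, pbL_fst, pb_facV hEM hσ hClim s ⟨δ, hδ⟩]
    have hw0 := s.w (fcHom (fcMk _ (pbU σ m δ) (pbU_mem hEM δ hδ hd))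
      (fcMk _ ⟨δ.1, pullback.fst σ.2 m ≫ δ.2⟩ (pb_jP hEM hσ δ hδ)) prod.fst h1)
    dsimp [FiltDiagram, fcHom, fcMk] at hw0
    exact hw0.symm
  · obtain ⟨g, hg⟩ := hd
    have h2 : (pbU σ m δ).2 ≫ prod.snd = pullback.snd σ.2 m := prod.lift_snd _ _
    have hχ : (pbU σ m δ).2 ≫ prod.map g (𝟙 V0) = (pbU σ m σ).2 := by
      dsimp [pbU]
      rw [prod.lift_map, Category.comp_id, Category.assoc, hg]
    have h3 := s.w (fcHom (fcMk _ (pbU σ m δ) (pbU_mem hEM δ hδ ⟨g, hg⟩))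
      (pbjU hEM hσ) (prod.map g (𝟙 V0)) hχ)
    dsimp [FiltDiagram, fcHom, fcMk] at h3
    rw [Category.assoc, h2, pbL_snd]
    have h4 : prod.map g (𝟙 V0) ≫ prod.snd = prod.snd := by
      rw [prod.map_snd, Category.comp_id]
    rw [← h3, Category.assoc, h4]

theorem pb_isLimit (hEM : EMCat D) (hσ : σ ∈ QC.carrier) (hClim : IsLimit (filtCone QC)) :
    Nonempty (IsLimit (filtCone (pbSF hEM hσ (m := m)))) := by
  refine ⟨⟨pbL hEM hσ hClim, fun s j => ?_, fun s m' w => ?_⟩⟩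
  · -- fac
    obtain ⟨δ, hδ, hd, W', eW, mW, hx, hm2, hf, h', hh'⟩ := j.2
    haveI : Mono mW := hm2
    have hjE : (⟨W', eW⟩ : MorFrom (pullback σ.2 m)) ∈ pbS QC σ m :=
      ⟨δ, hδ, hd, W', eW, mW, hx, hm2, hf, Dom.refl _⟩
    have hE : pbL hEM hσ hClim s ≫ eW = s.π.app ⟨⟨W', eW⟩, hjE⟩ := by
      have hw := s.w (fcHom (fcMk _ ⟨W', eW⟩ hjE)
        (fcMk _ (pbU σ m δ) (pbU_mem hEM δ hδ hd)) mW hf)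
      dsimp [FiltDiagram, fcHom, fcMk] at hw
      have hcancel : (pbL hEM hσ hClim s ≫ eW) ≫ mW = s.π.app ⟨⟨W', eW⟩, hjE⟩ ≫ mW := by
        rw [Category.assoc, hf, pb_facU hEM hσ hClim s δ hδ hd, hw]
      exact (cancel_mono mW).mp hcancel
    have hw2 := s.w (fcHom (fcMk _ ⟨W', eW⟩ hjE) j h' hh')
    dsimp [FiltDiagram, fcHom, fcMk] at hw2
    calc pbL hEM hσ hClim s ≫ j.1.2 = pbL hEM hσ hClim s ≫ eW ≫ h' := by rw [hh']
    _ = (pbL hEM hσ hClim s ≫ eW) ≫ h' := by rw [Category.assoc]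
    _ = s.π.app ⟨⟨W', eW⟩, hjE⟩ ≫ h' := by rw [hE]
    _ = s.π.app j := hw2
  · -- uniq
    apply pullback.hom_ext
    · rw [pbL_fst]
      apply hClim.hom_ext
      intro δ'
      have h5 := w ⟨⟨δ'.1.1, pullback.fst σ.2 m ≫ δ'.1.2⟩, pb_jP hEM hσ δ'.1 δ'.2⟩
      dsimp [filtCone] at h5 ⊢
      rw [Category.assoc, h5]
      exact (pb_facV hEM hσ hClim s δ').symm
    · rw [pbL_snd]
      have h6 := w (pbjU hEM hσ)
      dsimp [filtCone, pbjU, pbU] at h6 ⊢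
      rw [← h6, Category.assoc, prod.lift_snd]


end PBSection

/-- Key refinement: an extremal epimorphism `ρ : B → C` in `KD` has the property
that every element of the filtration of `C` is dominated by an element whose
composite with `ρ` is an extremal epimorphism of `D`. -/
theorem kd_extremal_refine [Limits.HasLimits D] (hEM : EMCat D) {B C : KObj D}
    (ρ : B ⟶ C) (hρ : ExtremalEpi ρ)
    (σ : MorFrom C.obj.obj.base) (hσ : σ ∈ C.obj.obj.filt.carrier) :
    ∃ (V : D) (s : C.obj.obj.base ⟶ V) (g : V ⟶ σ.1),
      (⟨V, s⟩ : MorFrom C.obj.obj.base) ∈ C.obj.obj.filt.carrier ∧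
      s ≫ g = σ.2 ∧ ExtremalEpi (kT ρ ≫ s) := by
  obtain ⟨V0, e, m, he, hm', hem⟩ := hEM.fact (kT ρ ≫ σ.2)
  haveI : Mono m := hm'
  have hClim : IsLimit (filtCone C.obj.obj.filt) := C.property.some
  set PBk : KObj D :=
    ⟨⟨⟨pullback σ.2 m, pbSF hEM hσ⟩, pbSF_reduced hEM hσ⟩, pb_isLimit hEM hσ hClim⟩
    with hPBk
  have hpe : kT ρ ≫ σ.2 = e ≫ m := hem.symm
  set ℓ : B.obj.obj.base ⟶ pullback σ.2 m := pullback.lift (kT ρ) e hpe with hℓdef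
  have hℓ₁ : ℓ ≫ pullback.fst σ.2 m = kT ρ := pullback.lift_fst _ _ _
  have hℓ₂ : ℓ ≫ pullback.snd σ.2 m = e := pullback.lift_snd _ _ _
  have hQred := B.obj.property
  have hQe : (⟨V0, e⟩ : MorFrom B.obj.obj.base) ∈ B.obj.obj.filt.carrier :=
    mono_division hEM hQred (kM ρ σ hσ) e m hm' hem
  have hmemS : ∀ r ∈ pbS C.obj.obj.filt σ m,
      (⟨r.1, ℓ ≫ r.2⟩ : MorFrom B.obj.obj.base) ∈ B.obj.obj.filt.carrier := by
    rintro r ⟨δ, hδ, hd, W', eW, mW, hx, hm2, hf, h', hh'⟩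
    have hQpδ : (⟨δ.1, kT ρ ≫ δ.2⟩ : MorFrom B.obj.obj.base) ∈
        B.obj.obj.filt.carrier := kM ρ δ hδ
    obtain ⟨δt, hδt, ⟨k₁, hk₁⟩, ⟨k₂, hk₂⟩⟩ := B.obj.obj.filt.directed' _ hQpδ _ hQe
    have hℓU : ℓ ≫ (pbU σ m δ).2 = prod.lift (kT ρ ≫ δ.2) e := by
      dsimp [pbU]
      rw [prod.comp_lift, ← Category.assoc, hℓ₁, hℓ₂]
    have hQU : (⟨δ.1 ⨯ V0, ℓ ≫ (pbU σ m δ).2⟩ : MorFrom B.obj.obj.base) ∈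
        B.obj.obj.filt.carrier :=
      B.obj.obj.filt.saturated' δt hδt _ ⟨prod.lift k₁ k₂, by
        show δt.2 ≫ prod.lift k₁ k₂ = ℓ ≫ (pbU σ m δ).2
        rw [hℓU]
        apply prod.hom_ext
        · erw [prod.lift_fst, Category.assoc, prod.lift_fst]
          exact hk₁
        · erw [prod.lift_snd, Category.assoc, prod.lift_snd]
          exact hk₂⟩
    have hQeW : (⟨W', ℓ ≫ eW⟩ : MorFrom B.obj.obj.base) ∈ B.obj.obj.filt.carrier :=
      mono_division hEM hQred hQU (ℓ ≫ eW) mW hm2 (by rw [Category.assoc, hf])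
    exact B.obj.obj.filt.saturated' _ hQeW _ ⟨h', by rw [Category.assoc, hh']⟩
  set mKD : PBk ⟶ C := kMk <| show PHom PBk.obj.obj C.obj.obj from
    ⟨pullback.fst σ.2 m, fun τ hτ => pb_jP hEM hσ τ hτ⟩ with hmKDdef
  set ℓKD : B ⟶ PBk := kMk <| show PHom B.obj.obj PBk.obj.obj from ⟨ℓ, hmemS⟩ with hℓKDdef
  have hMono : Mono mKD :=
    kMono_of_mono mKD (show Mono (pullback.fst σ.2 m) from inferInstance)
  have hIso : IsIso mKD := hρ.2 ℓKD mKD hMono (kExt hℓ₁)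
  set i : C.obj.obj.base ⟶ pullback σ.2 m := kT (inv mKD) with hidef
  have hi1 : pullback.fst σ.2 m ≫ i = 𝟙 (pullback σ.2 m) :=
    congrArg kT (IsIso.hom_inv_id mKD)
  have hi2 : i ≫ pullback.fst σ.2 m = 𝟙 C.obj.obj.base :=
    congrArg kT (IsIso.inv_hom_id mKD)
  have hsm : (i ≫ pullback.snd σ.2 m) ≫ m = σ.2 := by
    rw [Category.assoc, ← pullback.condition, ← Category.assoc, hi2, Category.id_comp]
  refine ⟨V0, i ≫ pullback.snd σ.2 m, m, ?_, hsm, ?_⟩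
  · exact mono_division hEM C.obj.property hσ (i ≫ pullback.snd σ.2 m) m hm' hsm
  · have heq : kT ρ ≫ i ≫ pullback.snd σ.2 m = e := by
      calc kT ρ ≫ i ≫ pullback.snd σ.2 m
          = (ℓ ≫ pullback.fst σ.2 m) ≫ i ≫ pullback.snd σ.2 m := by rw [hℓ₁]
        _ = ℓ ≫ (pullback.fst σ.2 m ≫ i) ≫ pullback.snd σ.2 m := by
            simp only [Category.assoc]
        _ = ℓ ≫ pullback.snd σ.2 m := by rw [hi1, Category.id_comp]
        _ = e := hℓ₂
    rw [heq]
    exact he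



theorem fc_app_congr {X : D} {P : ProjFilt X} (s : Cone (FiltDiagram P)) {Y : D}
    {f g : X ⟶ Y} (h : f = g) (hf : (⟨Y, f⟩ : MorFrom X) ∈ P.carrier)
    (hg : (⟨Y, g⟩ : MorFrom X) ∈ P.carrier) :
    s.π.app (fcMk P ⟨Y, f⟩ hf) = s.π.app (fcMk P ⟨Y, g⟩ hg) := by
  subst h
  rfl

/-- The comparison class: elements of the filtration of the underlying object
whose canonical discrete morphism lies in `R`. -/
def hatQ {B : KObj D} (R : ProjFilt B) : Set (MorFrom B.obj.obj.base) :=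
  {γ | ∃ h : γ ∈ B.obj.obj.filt.carrier,
    (⟨kDiscreteObj γ.1, kToDiscrete γ h⟩ : MorFrom B) ∈ R.carrier}

theorem hatQ_mem {B : KObj D} (R : ProjFilt B) (ρ : FiltCat R)
    (σ : MorFrom ρ.1.1.obj.obj.base) (hσ : σ ∈ ρ.1.1.obj.obj.filt.carrier) :
    (⟨σ.1, kT ρ.1.2 ≫ σ.2⟩ : MorFrom B.obj.obj.base) ∈ hatQ R := by
  refine ⟨kM ρ.1.2 σ hσ, ?_⟩
  refine R.saturated' ρ.1 ρ.2 _ ⟨kToDiscrete σ hσ, ?_⟩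
  exact kExt rfl

/-- The comparison filtration. -/
def hatQF {B : KObj D} (R : ProjFilt B) : ProjFilt B.obj.obj.base where
  carrier := hatQ R
  nonempty' := by
    obtain ⟨ρ₀, hρ₀⟩ := R.nonempty'
    obtain ⟨σ₀, hσ₀⟩ := ρ₀.1.obj.obj.filt.nonempty'
    exact ⟨_, hatQ_mem R ⟨ρ₀, hρ₀⟩ σ₀ hσ₀⟩
  directed' := by
    rintro γ₁ ⟨hQ₁, hR₁⟩ γ₂ ⟨hQ₂, hR₂⟩
    obtain ⟨ρ, hρ, ⟨h₁, e₁⟩, ⟨h₂, e₂⟩⟩ := R.directed' _ hR₁ _ hR₂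
    have hσ₁ : (⟨γ₁.1, kT h₁⟩ : MorFrom ρ.1.obj.obj.base) ∈
        ρ.1.obj.obj.filt.carrier := toHom_mem h₁
    have hσ₂ : (⟨γ₂.1, kT h₂⟩ : MorFrom ρ.1.obj.obj.base) ∈
        ρ.1.obj.obj.filt.carrier := toHom_mem h₂
    obtain ⟨σ, hσ, ⟨g₁, hg₁⟩, ⟨g₂, hg₂⟩⟩ := ρ.1.obj.obj.filt.directed' _ hσ₁ _ hσ₂
    refine ⟨⟨σ.1, kT ρ.2 ≫ σ.2⟩, hatQ_mem R ⟨ρ, hρ⟩ σ hσ, ⟨g₁, ?_⟩, ⟨g₂, ?_⟩⟩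
    · rw [Category.assoc, hg₁]
      exact congrArg kT e₁
    · rw [Category.assoc, hg₂]
      exact congrArg kT e₂
  saturated' := by
    rintro γ ⟨hQ, hR⟩ γ₂ ⟨g, hg⟩
    have hQ₂ : γ₂ ∈ B.obj.obj.filt.carrier := B.obj.obj.filt.saturated' γ hQ γ₂ ⟨g, hg⟩
    refine ⟨hQ₂, R.saturated' _ hR _
      ⟨fromDiscrete (B := kDiscreteObj γ₂.1) (show γ.1 ⟶ (kDiscreteObj γ₂.1).obj.obj.base from g), ?_⟩⟩
    exact kExt hg

theorem hatQF_reduced [Limits.HasLimits D] (hEM : EMCat D) {B : KObj D} (R : ProjFilt B)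
    (hRred : R.Reduced) : (hatQF R).Reduced := by
  rintro γ ⟨hQ, hR⟩
  obtain ⟨ρh, hρh, hext, h, he⟩ := hRred _ hR
  have hσh : (⟨γ.1, kT h⟩ : MorFrom ρh.1.obj.obj.base) ∈
      ρh.1.obj.obj.filt.carrier := toHom_mem h
  obtain ⟨V, sV, gV, hsmem, hsg, hxt⟩ := kd_extremal_refine hEM ρh.2 hext ⟨γ.1, kT h⟩ hσh
  refine ⟨⟨V, kT ρh.2 ≫ sV⟩, hatQ_mem R ⟨ρh, hρh⟩ ⟨V, sV⟩ hsmem, hxt, ⟨gV, ?_⟩⟩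
  rw [Category.assoc, hsg]
  exact congrArg kT he

/-- Restriction of a cone over the comparison filtration to a cone over the
filtration of the target of an element of `R`. -/
def hatCone {B : KObj D} {R : ProjFilt B} (s : Cone (FiltDiagram (hatQF R)))
    (ρ : FiltCat R) : Cone (FiltDiagram ρ.1.1.obj.obj.filt) where
  pt := s.pt
  π :=
    { app := fun σ => s.π.app (fcMk _ ⟨σ.1.1, kT ρ.1.2 ≫ σ.1.2⟩
        (hatQ_mem R ρ σ.1 σ.2))
      naturality := fun σ σ' g => by
        have h := s.w (fcHom (fcMk _ ⟨σ.1.1, kT ρ.1.2 ≫ σ.1.2⟩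
            (hatQ_mem R ρ σ.1 σ.2))
          (fcMk _ ⟨σ'.1.1, kT ρ.1.2 ≫ σ'.1.2⟩ (hatQ_mem R ρ σ'.1 σ'.2))
          g.1 (by rw [Category.assoc, g.2]))
        dsimp [FiltDiagram, fcMk, fcHom] at h ⊢
        rw [Category.id_comp]
        exact h.symm }

/-- The induced cone over the underlying diagram of `R` in `D`. -/
noncomputable def hatConeD {B : KObj D} {R : ProjFilt B}
    (s : Cone (FiltDiagram (hatQF R))) : Cone (FiltDiagram R ⋙ Kforget D) where
  pt := s.pt
  π :=
    { app := fun ρ => (ρ.1.1.property.some).lift (hatCone s ρ)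
      naturality := fun ρ ρ' hK => by
        apply (ρ'.1.1.property.some).hom_ext
        intro σ'
        show (𝟙 s.pt ≫ (ρ'.1.1.property.some).lift (hatCone s ρ')) ≫ σ'.1.2 =
          ((ρ.1.1.property.some).lift (hatCone s ρ) ≫ kT hK.1) ≫ σ'.1.2
        erw [Category.id_comp, Category.assoc]
        have hfacρ' : (ρ'.1.1.property.some).lift (hatCone s ρ') ≫ σ'.1.2 =
            s.π.app (fcMk _ ⟨σ'.1.1, kT ρ'.1.2 ≫ σ'.1.2⟩
              (hatQ_mem R ρ' σ'.1 σ'.2)) :=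
          (ρ'.1.1.property.some).fac (hatCone s ρ') σ'
        have hfacρ : (ρ.1.1.property.some).lift (hatCone s ρ) ≫
              (kT hK.1 ≫ σ'.1.2) =
            s.π.app (fcMk _ ⟨σ'.1.1, kT ρ.1.2 ≫ kT hK.1 ≫ σ'.1.2⟩
              (hatQ_mem R ρ ⟨σ'.1.1, kT hK.1 ≫ σ'.1.2⟩
                (kM hK.1 σ'.1 σ'.2))) :=
          (ρ.1.1.property.some).fac (hatCone s ρ)
            (fcMk _ ⟨σ'.1.1, kT hK.1 ≫ σ'.1.2⟩ (kM hK.1 σ'.1 σ'.2))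
        erw [hfacρ', hfacρ]
        exact fc_app_congr s (by
          rw [← Category.assoc]
          exact congrArg (fun q => q ≫ σ'.1.2) (congrArg kT hK.2).symm) _ _ }

theorem hatQF_iso [Limits.HasLimits D] {B : KObj D} (R : ProjFilt B)
    (hRiso : IsoFilt R) : IsoFilt (hatQF R) := by
  obtain ⟨hRlim⟩ := hRiso
  have hRD := kforgetIsLimit R hRlim
  constructor
  refine ⟨fun s => hRD.lift (hatConeD s), fun s j => ?_, fun s m' w => ?_⟩
  · -- fac
    obtain ⟨hQj, hRj⟩ := j.2
    set ρj : FiltCat R := ⟨⟨kDiscreteObj j.1.1, kToDiscrete j.1 hQj⟩, hRj⟩ with hρj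
    set σid : MorFrom ρj.1.1.obj.obj.base := ⟨ρj.1.1.obj.obj.base, 𝟙 _⟩ with hσid
    have h1 : hRD.lift (hatConeD s) ≫ j.1.2 = (hatConeD s).π.app ρj :=
      hRD.fac (hatConeD s) ρj
    have h3 : (ρj.1.1.property.some).lift (hatCone s ρj) ≫ σid.2 =
        s.π.app (fcMk _ ⟨σid.1, kT ρj.1.2 ≫ σid.2⟩ (hatQ_mem R ρj σid trivial)) :=
      (ρj.1.1.property.some).fac (hatCone s ρj) (fcMk _ σid trivial)
    have h4 : s.π.app (fcMk _ ⟨σid.1, kT ρj.1.2 ≫ σid.2⟩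
          (hatQ_mem R ρj σid trivial)) = s.π.app j :=
      fc_app_congr s (Category.comp_id _) _ j.2
    have h5 : (hatConeD s).π.app ρj =
        (ρj.1.1.property.some).lift (hatCone s ρj) ≫ σid.2 :=
      (Category.comp_id _).symm
    show hRD.lift (hatConeD s) ≫ j.1.2 = s.π.app j
    rw [h1, h5, h3, h4]
  · -- uniq
    apply hRD.uniq (hatConeD s) m'
    intro ρ
    apply (ρ.1.1.property.some).hom_ext
    intro σ
    show (m' ≫ kT ρ.1.2) ≫ σ.1.2 =
      (ρ.1.1.property.some).lift (hatCone s ρ) ≫ σ.1.2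
    have hfacρ : (ρ.1.1.property.some).lift (hatCone s ρ) ≫ σ.1.2 =
        s.π.app (fcMk _ ⟨σ.1.1, kT ρ.1.2 ≫ σ.1.2⟩ (hatQ_mem R ρ σ.1 σ.2)) :=
      (ρ.1.1.property.some).fac (hatCone s ρ) σ
    rw [hfacρ, Category.assoc]
    exact w (fcMk _ ⟨σ.1.1, kT ρ.1.2 ≫ σ.1.2⟩ (hatQ_mem R ρ σ.1 σ.2))


/-- The iso-filtered object carried by the comparison filtration. -/
@[reducible] def hatObj [Limits.HasLimits D] (hEM : EMCat D) {B : KObj D} (R : ProjFilt B)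
    (hRred : R.Reduced) (hRlim : IsLimit (filtCone R)) : KObj D :=
  ⟨⟨⟨B.obj.obj.base, hatQF R⟩, hatQF_reduced hEM R hRred⟩, hatQF_iso R ⟨hRlim⟩⟩

/-- The canonical cone over the diagram of `R` with apex the comparison object. -/
def hatKCone [Limits.HasLimits D] (hEM : EMCat D) {B : KObj D} (R : ProjFilt B)
    (hRred : R.Reduced) (hRlim : IsLimit (filtCone R)) : Cone (FiltDiagram R) where
  pt := hatObj hEM R hRred hRlim
  π :=
    { app := fun ρ => kMk <| show PHom (hatObj hEM R hRred hRlim).obj.obj ρ.1.1.obj.obj from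
        ⟨(kT ρ.1.2 : B.obj.obj.base ⟶ ρ.1.1.obj.obj.base),
          fun σ hσ => hatQ_mem R ρ σ hσ⟩
      naturality := fun ρ ρ' hK => by
        apply kExt
        show 𝟙 B.obj.obj.base ≫ kT ρ'.1.2 =
          kT ρ.1.2 ≫ kT hK.1
        rw [Category.id_comp]
        exact (congrArg kT hK.2).symm }

theorem hatKCone_app_toHom [Limits.HasLimits D] (hEM : EMCat D) {B : KObj D}
    (R : ProjFilt B) (hRred : R.Reduced) (hRlim : IsLimit (filtCone R)) (ρ : FiltCat R) :
    kT ((hatKCone hEM R hRred hRlim).π.app ρ) = kT ρ.1.2 := rfl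

/-- LEMMA A: every `KD`-morphism from the underlying object of an iso-filtered
object of `K(KD)` to a discrete object belongs to the filtration. -/
theorem discrete_mem_filt [Limits.HasLimits D] (hEM : EMCat D)
    {B : KObj D} (R : ProjFilt B) (hRred : R.Reduced) (hRiso : IsoFilt R)
    {Y : D} (t : B ⟶ kDiscreteObj Y) :
    (⟨kDiscreteObj Y, t⟩ : MorFrom B) ∈ R.carrier := by
  obtain ⟨hRlim⟩ := hRiso
  have hRD := kforgetIsLimit R hRlim
  have hDid : kT (hRlim.lift (hatKCone hEM R hRred hRlim)) = 𝟙 B.obj.obj.base := by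
    apply hRD.hom_ext
    intro ρ
    show kT (hRlim.lift (hatKCone hEM R hRred hRlim)) ≫ kT ρ.1.2 =
      𝟙 B.obj.obj.base ≫ kT ρ.1.2
    rw [Category.id_comp]
    exact congrArg kT (hRlim.fac (hatKCone hEM R hRred hRlim) ρ)
  have hsub : ∀ (ℓK : hatObj hEM R hRred hRlim ⟶ B),
      kT ℓK = 𝟙 B.obj.obj.base → ∀ γ ∈ B.obj.obj.filt.carrier, γ ∈ hatQ R := by
    intro ℓK hid γ hγ
    have hmem := kM ℓK γ hγ
    rw [hid, Category.id_comp] at hmem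
    exact hmem
  have hτ : (⟨Y, kT t⟩ : MorFrom B.obj.obj.base) ∈ B.obj.obj.filt.carrier :=
    toHom_mem t
  obtain ⟨hQτ, hRτ⟩ := hsub (hRlim.lift (hatKCone hEM R hRred hRlim)) hDid _ hτ
  have heq : (⟨kDiscreteObj Y, kToDiscrete ⟨Y, kT t⟩ hQτ⟩ : MorFrom B) =
      ⟨kDiscreteObj Y, t⟩ := Sigma.ext rfl (heq_of_eq (kExt rfl))
  exact heq ▸ hRτ

/-- The canonical filtration on an iso-filtered object, as a projective
filtration on the object of `KD`. -/
def canonFilt (A : KObj D) : ProjFilt A where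
  carrier := canonSat A
  nonempty' := by
    obtain ⟨δ₀, h₀⟩ := A.obj.obj.filt.nonempty'
    exact ⟨⟨kDiscreteObj δ₀.1, kToDiscrete δ₀ h₀⟩, ⟨_, ⟨δ₀, h₀, rfl⟩, Dom.refl _⟩⟩
  directed' := by
    rintro μ₁ ⟨ν₁, ⟨δ₁, hδ₁, rfl⟩, hdom₁⟩ μ₂ ⟨ν₂, ⟨δ₂, hδ₂, rfl⟩, hdom₂⟩
    obtain ⟨δ, hδ, ⟨g₁, hg₁⟩, ⟨g₂, hg₂⟩⟩ := A.obj.obj.filt.directed' δ₁ hδ₁ δ₂ hδ₂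
    refine ⟨⟨kDiscreteObj δ.1, kToDiscrete δ hδ⟩, ⟨_, ⟨δ, hδ, rfl⟩, Dom.refl _⟩, ?_, ?_⟩
    · exact Dom.trans (b := ⟨kDiscreteObj δ₁.1, kToDiscrete δ₁ hδ₁⟩)
        ⟨fromDiscrete (show δ.1 ⟶ (kDiscreteObj δ₁.1).obj.obj.base from g₁),
          kExt hg₁⟩ hdom₁
    · exact Dom.trans (b := ⟨kDiscreteObj δ₂.1, kToDiscrete δ₂ hδ₂⟩)
        ⟨fromDiscrete (show δ.1 ⟶ (kDiscreteObj δ₂.1).obj.obj.base from g₂),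
          kExt hg₂⟩ hdom₂
  saturated' := by
    rintro μ₁ ⟨ν, hν, hdom⟩ μ₂ hd
    exact ⟨ν, hν, Dom.trans hdom hd⟩

theorem canonFilt_reduced (A : KObj D) : (canonFilt A).Reduced := by
  rintro μ ⟨ν, ⟨δ, hδ, rfl⟩, hdom⟩
  obtain ⟨ε, hε, hext, g, hg⟩ := A.obj.property δ hδ
  refine ⟨⟨kDiscreteObj ε.1, kToDiscrete ε hε⟩, ⟨_, ⟨ε, hε, rfl⟩, Dom.refl _⟩,
    kToDiscrete_extremal hε hext, ?_⟩
  exact Dom.trans (b := ⟨kDiscreteObj δ.1, kToDiscrete δ hδ⟩)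
    ⟨fromDiscrete (show ε.1 ⟶ (kDiscreteObj δ.1).obj.obj.base from g),
      kExt hg⟩ hdom

/-- Restriction of a cone over the canonical filtration to a `D`-cone over the
filtration of `A`. -/
def canonConeD {A : KObj D} (s : Cone (FiltDiagram (canonFilt A))) :
    Cone (FiltDiagram A.obj.obj.filt) where
  pt := s.pt.obj.obj.base
  π :=
    { app := fun δ => kT (s.π.app (fcMk (canonFilt A) ⟨kDiscreteObj δ.1.1, kToDiscrete δ.1 δ.2⟩
        ⟨_, ⟨δ.1, δ.2, rfl⟩, Dom.refl _⟩))
      naturality := fun δ δ' g => by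
        have h := s.w (fcHom
          (fcMk (canonFilt A) ⟨kDiscreteObj δ.1.1, kToDiscrete δ.1 δ.2⟩ ⟨_, ⟨δ.1, δ.2, rfl⟩, Dom.refl _⟩)
          (fcMk (canonFilt A) ⟨kDiscreteObj δ'.1.1, kToDiscrete δ'.1 δ'.2⟩
            ⟨_, ⟨δ'.1, δ'.2, rfl⟩, Dom.refl _⟩)
          (fromDiscrete (show δ.1.1 ⟶ (kDiscreteObj δ'.1.1).obj.obj.base from g.1))
          (kExt g.2))
        dsimp [FiltDiagram] at h ⊢
        erw [Category.id_comp]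
        exact (congrArg kT h).symm }

/-- The canonical lift for a cone over the canonical filtration. -/
noncomputable def canonLift {A : KObj D} (hAlim : IsLimit (filtCone A.obj.obj.filt))
    (s : Cone (FiltDiagram (canonFilt A))) : s.pt ⟶ A :=
  kMk <| show PHom s.pt.obj.obj A.obj.obj from
    ⟨hAlim.lift (canonConeD s), fun γ hγ => by
      have hfac : hAlim.lift (canonConeD s) ≫ γ.2 =
          kT (s.π.app (fcMk (canonFilt A) ⟨kDiscreteObj γ.1, kToDiscrete γ hγ⟩
            ⟨_, ⟨γ, hγ, rfl⟩, Dom.refl _⟩)) :=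
        hAlim.fac (canonConeD s) (fcMk _ γ hγ)
      erw [hfac]
      exact toHom_mem _⟩

theorem canonFilt_iso (A : KObj D) : IsoFilt (canonFilt A) := by
  obtain ⟨hAlim⟩ := A.property
  constructor
  refine ⟨fun s => canonLift hAlim s, fun s j => ?_, fun s m' w => ?_⟩
  · obtain ⟨ν, ⟨δ, hδ, hν⟩, h, hh⟩ := j.2
    subst hν
    have h1 : canonLift hAlim s ≫ kToDiscrete δ hδ =
        s.π.app (fcMk (canonFilt A) ⟨kDiscreteObj δ.1, kToDiscrete δ hδ⟩
          ⟨_, ⟨δ, hδ, rfl⟩, Dom.refl _⟩) :=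
      kExt (hAlim.fac (canonConeD s) (fcMk _ δ hδ))
    have h2 := s.w (fcHom
      (fcMk (canonFilt A) ⟨kDiscreteObj δ.1, kToDiscrete δ hδ⟩ ⟨_, ⟨δ, hδ, rfl⟩, Dom.refl _⟩)
      j h hh)
    dsimp [FiltDiagram, fcHom, fcMk] at h2
    show canonLift hAlim s ≫ j.1.2 = s.π.app j
    rw [← hh, ← Category.assoc, h1]
    exact h2
  · apply kExt
    apply hAlim.hom_ext
    intro δ
    show kT m' ≫ δ.1.2 = kT (canonLift hAlim s) ≫ δ.1.2
    have h2 : kT (canonLift hAlim s) ≫ δ.1.2 =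
        kT (s.π.app (fcMk (canonFilt A) ⟨kDiscreteObj δ.1.1, kToDiscrete δ.1 δ.2⟩
          ⟨_, ⟨δ.1, δ.2, rfl⟩, Dom.refl _⟩)) :=
      hAlim.fac (canonConeD s) δ
    rw [h2]
    exact congrArg kT (w (fcMk (canonFilt A) ⟨kDiscreteObj δ.1.1, kToDiscrete δ.1 δ.2⟩
      ⟨_, ⟨δ.1, δ.2, rfl⟩, Dom.refl _⟩))

/-- The canonical filtration functor `κ : KD → K(KD)`. -/
def kappa (D : Type u) [Category.{v} D] : KObj D ⥤ KObj (KObj D) where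
  obj A := ⟨⟨⟨A, canonFilt A⟩, canonFilt_reduced A⟩, canonFilt_iso A⟩
  map {A B} f := kMk <| show PHom (⟨A, canonFilt A⟩ : PObj (KObj D)) ⟨B, canonFilt B⟩ from
    ⟨f, by
      rintro μ ⟨ν, ⟨δ, hδ, rfl⟩, h, hh⟩
      refine ⟨⟨kDiscreteObj δ.1, kToDiscrete (⟨δ.1, kT f ≫ δ.2⟩ :
          MorFrom A.obj.obj.base) (kM f δ hδ)⟩,
        ⟨⟨δ.1, kT f ≫ δ.2⟩, kM f δ hδ, rfl⟩, h, ?_⟩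
      apply kExt
      show (kT f ≫ δ.2) ≫ kT h = kT f ≫ kT μ.2
      erw [Category.assoc]
      exact congrArg (fun q => kT f ≫ q) (congrArg kT hh)⟩
  map_id _ := kExt rfl
  map_comp _ _ := kExt rfl


/-- for each iso-filtered object `A = (X, Q)` of `KD`, the
projective filtration on the `KD`-object `A` generated by the `KD`-morphisms
`A → Δ(X_δ)` for `δ ∈ Q` is a reduced iso-filtration in `KD`; the resulting
canonical filtration functor `κ : KD → K(KD)` is both a right inverse and a
right adjoint to the forgetful functor `K(KD) → KD`. -/
theorem canonical_filtration_functor [Limits.HasLimits D] [Limits.HasColimits D]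
    (hecwp : ECWP D) (hEM : EMCat D) :
    (∀ A : KObj D, ∃ P : ProjFilt A,
      P.carrier = canonSat A ∧ P.Reduced ∧ IsoFilt P) ∧
    ∃ κ : KObj D ⥤ KObj (KObj D),
      κ ⋙ Kforget (KObj D) = 𝟭 (KObj D) ∧
      Nonempty (Kforget (KObj D) ⊣ κ) ∧
      ∀ A : KObj D, ∃ h : (κ.obj A).obj.obj.base = A,
        (κ.obj A).obj.obj.filt.carrier =
          {μ : MorFrom ((κ.obj A).obj.obj.base) |
            (⟨μ.1, eqToHom h.symm ≫ μ.2⟩ : MorFrom A) ∈ canonSat A} := by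
  refine ⟨fun A => ⟨canonFilt A, rfl, canonFilt_reduced A, canonFilt_iso A⟩,
    kappa D, rfl, ⟨?_⟩, ?_⟩
  · refine Adjunction.mkOfHomEquiv
      { homEquiv := fun B' A =>
          { toFun := fun f => kMk <| show PHom B'.obj.obj (⟨A, canonFilt A⟩ : PObj (KObj D)) from
              ⟨f, ?_⟩
            invFun := fun g => kT g
            left_inv := fun f => rfl
            right_inv := fun g => kExt rfl }
        homEquiv_naturality_left_symm := fun f g => rfl
        homEquiv_naturality_right := fun f g => kExt rfl }
    rintro μ ⟨ν, ⟨δ, hδ, rfl⟩, h, hh⟩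
    refine B'.obj.obj.filt.saturated' ⟨kDiscreteObj δ.1, f ≫ kToDiscrete δ hδ⟩
      (discrete_mem_filt hEM B'.obj.obj.filt B'.obj.property B'.property
        (f ≫ kToDiscrete δ hδ)) _ ⟨h, ?_⟩
    apply kExt
    show (kT f ≫ δ.2) ≫ kT h = kT f ≫ kT μ.2
    erw [Category.assoc]
    exact congrArg (fun q => kT f ≫ q) (congrArg kT hh)
  · intro A
    refine ⟨rfl, ?_⟩
    ext μ
    simp only [Set.mem_setOf_eq, eqToHom_refl, Category.id_comp]
    erw [eqToHom_refl, Category.id_comp]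
    exact Iff.rfl

end FilteredCats
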